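/- Friedgut's inequality: Let Q be a full conjunctive query with multi-hypergraph H = ([n], E) and finite input relations R_F for F ∈ E, and let δ = (δ_F)_{F∈E} be a fractional edge cover of H. For each F ∈ E let w_F : ∏_{i∈F} Dom(A_i) → ℝ≥0 be an arbitrary nonnegative weight function. Then ∑_{a ∈ Q} ∏_{F∈E} (w_F(a_F))^{δ_F} ≤ ∏_{F∈E} ( ∑_{t ∈ R_F} w_F(t) )^{δ_F}, where the convention 0^0 = 0 is used. -/
import Mathlib


open Finset

/-- Real power with the convention `0 ^ 0 = 0`. -/
noncomputable def rpow0 (x p : ℝ) : ℝ := if x = 0 then 0 else x ^ p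

open Finset
open scoped ENNReal

namespace FriedgutAux


lemma tsum_holder_one {γ ι : Type*} (s : Finset ι) (f : ι → γ → ℝ≥0∞)
    {p : ι → ℝ} (hp : ∑ i ∈ s, p i = 1) (h2p : ∀ i ∈ s, 0 ≤ p i) :
    ∑' x, ∏ i ∈ s, f i x ^ p i ≤ ∏ i ∈ s, (∑' x, f i x) ^ p i := by
  letI : MeasurableSpace γ := ⊤
  haveI : MeasurableSingletonClass γ := ⟨fun _ => trivial⟩
  have hm : ∀ i ∈ s, AEMeasurable (f i) MeasureTheory.Measure.count :=
    fun i _ => Measurable.aemeasurable (fun t _ => trivial)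
  have := ENNReal.lintegral_prod_norm_pow_le (μ := MeasureTheory.Measure.count) s hm hp h2p
  simpa [MeasureTheory.lintegral_count] using this

lemma self_mul_rpow (x : ℝ≥0∞) {σ : ℝ} (hσ : 1 ≤ σ) : x * x ^ (σ - 1) = x ^ σ := by
  rcases eq_or_lt_of_le hσ with h | h
  · simp [← h]
  · have h1 : (0:ℝ) < σ - 1 := by linarith
    rcases eq_or_ne x 0 with rfl | hx0
    · simp [ENNReal.zero_rpow_of_pos h1, ENNReal.zero_rpow_of_pos (by linarith : (0:ℝ) < σ)]
    rcases eq_or_ne x ∞ with rfl | hxt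
    · simp [ENNReal.top_rpow_of_pos h1, ENNReal.top_rpow_of_pos (by linarith : (0:ℝ) < σ)]
    · have h2 := ENNReal.rpow_add (x := x) 1 (σ - 1) hx0 hxt
      rw [ENNReal.rpow_one] at h2
      rw [← h2]
      congr 1
      ring

lemma tsum_rpow_le {γ : Type*} (g : γ → ℝ≥0∞) {σ : ℝ} (hσ : 1 ≤ σ) :
    ∑' x, g x ^ σ ≤ (∑' x, g x) ^ σ := by
  have h0 : (0:ℝ) < σ := lt_of_lt_of_le one_pos hσ
  calc ∑' x, g x ^ σ ≤ ∑' x, g x * (∑' y, g y) ^ (σ - 1) := by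
        refine ENNReal.tsum_le_tsum fun x => ?_
        rw [← self_mul_rpow (g x) hσ]
        exact mul_le_mul_right (ENNReal.rpow_le_rpow (ENNReal.le_tsum x) (by linarith)) _
    _ = (∑' x, g x) * (∑' y, g y) ^ (σ - 1) := ENNReal.tsum_mul_right
    _ = (∑' x, g x) ^ σ := self_mul_rpow _ hσ

lemma tsum_holder {γ ι : Type*} (s : Finset ι) (f : ι → γ → ℝ≥0∞)
    {p : ι → ℝ} (h2p : ∀ i ∈ s, 0 ≤ p i) (h1 : 1 ≤ ∑ i ∈ s, p i) :
    ∑' x, ∏ i ∈ s, f i x ^ p i ≤ ∏ i ∈ s, (∑' x, f i x) ^ p i := by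
  set σ := ∑ i ∈ s, p i with hσdef
  have hσ0 : (0:ℝ) < σ := lt_of_lt_of_le one_pos h1
  have hkey : ∀ (g : ι → ℝ≥0∞), ∏ i ∈ s, g i ^ p i = (∏ i ∈ s, g i ^ (p i / σ)) ^ σ := by
    intro g
    rw [← ENNReal.prod_rpow_of_nonneg hσ0.le]
    refine Finset.prod_congr rfl fun i hi => ?_
    rw [← ENNReal.rpow_mul, div_mul_cancel₀ _ hσ0.ne']
  have hsum1 : ∑ i ∈ s, p i / σ = 1 := by
    rw [← Finset.sum_div, ← hσdef, div_self hσ0.ne']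
  calc ∑' x, ∏ i ∈ s, f i x ^ p i
      = ∑' x, (∏ i ∈ s, f i x ^ (p i / σ)) ^ σ := tsum_congr fun x => hkey _
    _ ≤ (∑' x, ∏ i ∈ s, f i x ^ (p i / σ)) ^ σ := tsum_rpow_le _ h1
    _ ≤ (∏ i ∈ s, (∑' x, f i x) ^ (p i / σ)) ^ σ := by
        refine ENNReal.rpow_le_rpow ?_ hσ0.le
        exact tsum_holder_one s f hsum1 fun i hi => div_nonneg (h2p i hi) hσ0.le
    _ = ∏ i ∈ s, (∑' x, f i x) ^ p i := (hkey _).symm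


variable {V : Type*} [DecidableEq V] {Dom : V → Type*}

def T (d : ∀ i, Dom i) (S : Finset V) : Type _ :=
  {a : ∀ i, Dom i // ∀ i, i ∉ S → a i = d i}

def insertEquiv (d : ∀ i, Dom i) (v : V) (S : Finset V) (hv : v ∉ S) :
    Dom v × T d S ≃ T d (insert v S) where
  toFun p := ⟨Function.update p.2.1 v p.1, fun i hi => by
    have hiv : i ≠ v := fun h => hi (h ▸ mem_insert_self v S)
    rw [Function.update_of_ne hiv]
    exact p.2.2 i (fun h => hi (mem_insert_of_mem h))⟩
  invFun a := (a.1 v, ⟨Function.update a.1 v (d v), fun i hi => by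
    rcases eq_or_ne i v with rfl | hiv
    · rw [Function.update_self]
    · rw [Function.update_of_ne hiv]
      exact a.2 i (by simp [hiv, hi])⟩)
  left_inv p := by
    obtain ⟨x, a⟩ := p
    refine Prod.ext (by simp) ?_
    refine Subtype.ext (funext fun i => ?_)
    rcases eq_or_ne i v with rfl | hiv
    · simp [a.2 i hv]
    · simp [Function.update_of_ne hiv]
  right_inv a := by
    refine Subtype.ext (funext fun i => ?_)
    rcases eq_or_ne i v with rfl | hiv
    · simp
    · simp [Function.update_of_ne hiv]

lemma tsum_T_insert (d : ∀ i, Dom i) (g : (∀ i, Dom i) → ℝ≥0∞) (v : V) (S : Finset V)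
    (hv : v ∉ S) :
    ∑' a : T d (insert v S), g a.1
      = ∑' x : Dom v, ∑' a : T d S, g (Function.update a.1 v x) := by
  rw [← Equiv.tsum_eq (insertEquiv d v S hv) (fun a => g a.1)]
  exact ENNReal.tsum_prod (f := fun (x : Dom v) (a : T d S) => g (Function.update a.1 v x))

instance uniqueTEmpty (d : ∀ i, Dom i) : Unique (T d (∅ : Finset V)) where
  default := ⟨d, fun _ _ => rfl⟩
  uniq a := Subtype.ext (funext fun i => a.2 i (notMem_empty i))

lemma tsum_T_empty (d : ∀ i, Dom i) (g : (∀ i, Dom i) → ℝ≥0∞) :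
    ∑' a : T d (∅ : Finset V), g a.1 = g d :=
  tsum_eq_single (default : T d (∅ : Finset V))
    (fun b hb => absurd (Subsingleton.elim b default) hb)


set_option maxHeartbeats 1000000 in
lemma main_induction {V : Type*} [DecidableEq V] {Dom : V → Type*} (d : ∀ i, Dom i)
    {ι : Type*} [Fintype ι] (F : ι → Finset V) (δ : ι → ℝ) (hδ : ∀ e, 0 ≤ δ e)
    (S : Finset V)
    (w : ι → (∀ i, Dom i) → ℝ≥0∞)
    (hdep : ∀ e a b, (∀ i ∈ F e, a i = b i) → w e a = w e b)
    (hcov : ∀ v ∈ S, 1 ≤ ∑ e ∈ univ.filter (fun e => v ∈ F e), δ e) :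
    ∑' a : T d S, ∏ e, w e a.1 ^ δ e
      ≤ ∏ e, (∑' t : T d (F e ∩ S), w e t.1) ^ δ e := by
  induction S using Finset.induction generalizing w with
  | empty =>
    rw [tsum_T_empty d (fun a => ∏ e, w e a ^ δ e)]
    refine le_of_eq (Finset.prod_congr rfl fun e _ => ?_)
    rw [Finset.inter_empty, tsum_T_empty d (w e)]
  | @insert v S' hv ih =>
    set w' : ι → (∀ i, Dom i) → ℝ≥0∞ :=
      fun e a => if v ∈ F e then ∑' x : Dom v, w e (Function.update a v x) else w e a
      with hw'
    have hupd : ∀ e, v ∉ F e → ∀ (a : ∀ i, Dom i) (x : Dom v),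
        w e (Function.update a v x) = w e a := by
      intro e hvF a x
      refine hdep e _ _ fun i hi => ?_
      have hiv : i ≠ v := fun h => hvF (h ▸ hi)
      rw [Function.update_of_ne hiv]
    have hdep' : ∀ e a b, (∀ i ∈ F e, a i = b i) → w' e a = w' e b := by
      intro e a b hab
      by_cases hvF : v ∈ F e
      · simp only [hw', if_pos hvF]
        refine tsum_congr fun x => hdep e _ _ fun i hi => ?_
        rcases eq_or_ne i v with rfl | hne
        · simp
        · rw [Function.update_of_ne hne, Function.update_of_ne hne]
          exact hab i hi
      · simp only [hw', if_neg hvF]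
        exact hdep e a b hab
    have step1 : ∑' a : T d (insert v S'), ∏ e, w e a.1 ^ δ e
        ≤ ∑' a : T d S', ∏ e, w' e a.1 ^ δ e := by
      rw [tsum_T_insert d (fun y => ∏ e, w e y ^ δ e) v S' hv, ENNReal.tsum_comm]
      refine ENNReal.tsum_le_tsum fun a => ?_
      have hsplit : ∀ (g : ι → ℝ≥0∞), ∏ e, g e
          = (∏ e ∈ univ.filter (fun e => v ∈ F e), g e)
            * ∏ e ∈ univ.filter (fun e => ¬ v ∈ F e), g e :=
        fun g => (Finset.prod_filter_mul_prod_filter_not univ _ g).symm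
      calc ∑' x : Dom v, ∏ e, w e (Function.update a.1 v x) ^ δ e
          = ∑' x : Dom v,
              (∏ e ∈ univ.filter (fun e => v ∈ F e), w e (Function.update a.1 v x) ^ δ e)
              * ∏ e ∈ univ.filter (fun e => ¬ v ∈ F e), w e a.1 ^ δ e := by
            refine tsum_congr fun x => ?_
            rw [hsplit (fun e => w e (Function.update a.1 v x) ^ δ e)]
            congr 1
            refine Finset.prod_congr rfl fun e he => ?_
            rw [hupd e (Finset.mem_filter.1 he).2 a.1 x]
        _ = (∑' x : Dom v,
              ∏ e ∈ univ.filter (fun e => v ∈ F e), w e (Function.update a.1 v x) ^ δ e)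
              * ∏ e ∈ univ.filter (fun e => ¬ v ∈ F e), w e a.1 ^ δ e :=
            ENNReal.tsum_mul_right
        _ ≤ (∏ e ∈ univ.filter (fun e => v ∈ F e),
                (∑' x : Dom v, w e (Function.update a.1 v x)) ^ δ e)
              * ∏ e ∈ univ.filter (fun e => ¬ v ∈ F e), w e a.1 ^ δ e := by
            refine mul_le_mul_left ?_ _
            exact tsum_holder _ _ (fun e _ => hδ e) (hcov v (mem_insert_self v S'))
        _ = ∏ e, w' e a.1 ^ δ e := by
            rw [hsplit (fun e => w' e a.1 ^ δ e)]
            congr 1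
            · refine Finset.prod_congr rfl fun e he => ?_
              rw [hw']
              simp only [if_pos (Finset.mem_filter.1 he).2]
            · refine Finset.prod_congr rfl fun e he => ?_
              rw [hw']
              simp only [if_neg (Finset.mem_filter.1 he).2]
    have step2 := ih w' hdep' (fun u hu => hcov u (mem_insert_of_mem hu))
    refine le_trans (le_trans step1 step2) (le_of_eq ?_)
    refine Finset.prod_congr rfl fun e _ => ?_
    congr 1
    by_cases hvF : v ∈ F e
    · have hFS : F e ∩ insert v S' = insert v (F e ∩ S') := by
        ext i
        simp only [Finset.mem_inter, Finset.mem_insert]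
        constructor
        · rintro ⟨h1, h2 | h2⟩
          · exact Or.inl h2
          · exact Or.inr ⟨h1, h2⟩
        · rintro (rfl | ⟨h1, h2⟩)
          · exact ⟨hvF, Or.inl rfl⟩
          · exact ⟨h1, Or.inr h2⟩
      have hvS : v ∉ F e ∩ S' := fun h => hv (Finset.mem_inter.1 h).2
      rw [hFS, tsum_T_insert d (w e) v _ hvS, ENNReal.tsum_comm]
      refine tsum_congr fun t => ?_
      rw [hw']
      simp only [if_pos hvF]
    · have hFS : F e ∩ insert v S' = F e ∩ S' := by
        ext i
        simp only [Finset.mem_inter, Finset.mem_insert]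
        constructor
        · rintro ⟨h1, h2 | h2⟩
          · exact absurd (h2 ▸ h1) hvF
          · exact ⟨h1, h2⟩
        · rintro ⟨h1, h2⟩
          exact ⟨h1, Or.inr h2⟩
      rw [hFS]
      refine tsum_congr fun t => ?_
      rw [hw']
      simp only [if_neg hvF]


def restrictEquiv (d : ∀ i, Dom i) (s : Finset V) :
    ((i : {x // x ∈ s}) → Dom i.1) ≃ T d s where
  toFun u := ⟨fun i => if h : i ∈ s then u ⟨i, h⟩ else d i, fun i hi => dif_neg hi⟩
  invFun t i := t.1 i.1
  left_inv u := by
    funext i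
    simp only [dif_pos i.2]
  right_inv t := by
    refine Subtype.ext (funext fun i => ?_)
    by_cases h : i ∈ s
    · simp only [dif_pos h]
    · simp only [dif_neg h]
      exact (t.2 i h).symm

lemma rpow0_nonneg {x p : ℝ} (hx : 0 ≤ x) : 0 ≤ rpow0 x p := by
  unfold rpow0
  split
  · exact le_refl 0
  · exact Real.rpow_nonneg hx p

lemma rpow0_le_rpow {x p : ℝ} (hx : 0 ≤ x) : rpow0 x p ≤ x ^ p := by
  unfold rpow0
  split
  · exact Real.rpow_nonneg hx p
  · exact le_refl _

end FriedgutAux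

open FriedgutAux in

/-- **Friedgut's inequality.** Given a full conjunctive query with multi-hypergraph
`([n], E)` (edges indexed by `ι`), finite relations `R e`, a fractional edge cover `δ`,
and nonnegative weight functions `w e`, the weighted output sum is bounded by the
product of the weighted relation sums, using the convention `0 ^ 0 = 0`. -/
theorem friedgut_inequality
    {n : ℕ} (hn : 1 ≤ n) (Dom : Fin n → Type*)
    {ι : Type*} [Fintype ι]
    (F : ι → Finset (Fin n))
    (hFne : ∀ e : ι, (F e).Nonempty)
    (R : (e : ι) → Finset ((i : {x // x ∈ F e}) → Dom i.val))
    (δ : ι → ℝ) (hδ : ∀ e, 0 ≤ δ e)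
    (hcover : ∀ v : Fin n, 1 ≤ ∑ e ∈ Finset.univ.filter (fun e => v ∈ F e), δ e)
    (w : (e : ι) → (((i : {x // x ∈ F e}) → Dom i.val) → ℝ))
    (hw : ∀ e t, 0 ≤ w e t)
    (Q : Finset (∀ i, Dom i))
    (hQ : ∀ a : ∀ i, Dom i, a ∈ Q ↔ ∀ e : ι, (fun i : {x // x ∈ F e} => a i.val) ∈ R e) :
    ∑ a ∈ Q, ∏ e : ι, rpow0 (w e (fun i : {x // x ∈ F e} => a i.val)) (δ e)
      ≤ ∏ e : ι, rpow0 (∑ t ∈ R e, w e t) (δ e) := by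
  classical
  by_cases hdeg : ∃ e, ∑ t ∈ R e, w e t = 0
  · obtain ⟨e0, he0⟩ := hdeg
    have hRHS : ∏ e, rpow0 (∑ t ∈ R e, w e t) (δ e) = 0 :=
      Finset.prod_eq_zero (mem_univ e0) (by rw [he0]; simp [rpow0])
    rw [hRHS]
    have hz : ∀ a ∈ Q, ∏ e, rpow0 (w e (fun i : {x // x ∈ F e} => a i.val)) (δ e) = 0 := by
      intro a ha
      refine Finset.prod_eq_zero (mem_univ e0) ?_
      have hmem : (fun i : {x // x ∈ F e0} => a i.val) ∈ R e0 := (hQ a).1 ha e0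
      have hw0 : w e0 (fun i : {x // x ∈ F e0} => a i.val) = 0 :=
        (Finset.sum_eq_zero_iff_of_nonneg (fun t _ => hw e0 t)).1 he0 _ hmem
      rw [hw0]
      simp [rpow0]
    rw [Finset.sum_eq_zero hz]
  · push_neg at hdeg
    have hSnn : ∀ e, 0 ≤ ∑ t ∈ R e, w e t :=
      fun e => Finset.sum_nonneg fun t _ => hw e t
    have hRne : ∀ e, (R e).Nonempty := by
      intro e
      rcases Finset.eq_empty_or_nonempty (R e) with h | h
      · exact absurd (by rw [h, Finset.sum_empty]) (hdeg e)
      · exact h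
    have hNE : ∀ i, Nonempty (Dom i) := by
      intro i
      have h1 := hcover i
      have hfil : (Finset.univ.filter (fun e => i ∈ F e)).Nonempty := by
        rcases Finset.eq_empty_or_nonempty (Finset.univ.filter (fun e => i ∈ F e)) with h | h
        · rw [h, Finset.sum_empty] at h1
          linarith
        · exact h
      obtain ⟨e, he⟩ := hfil
      have hie : i ∈ F e := (Finset.mem_filter.1 he).2
      obtain ⟨t, _⟩ := hRne e
      exact ⟨t ⟨i, hie⟩⟩
    have d : ∀ i, Dom i := fun i => (hNE i).some
    set wE : ι → (∀ i, Dom i) → ℝ≥0∞ := fun e a =>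
      if (fun i : {x // x ∈ F e} => a i.val) ∈ R e
        then ENNReal.ofReal (w e (fun i : {x // x ∈ F e} => a i.val)) else 0
      with hwE
    have hdepE : ∀ e a b, (∀ i ∈ F e, a i = b i) → wE e a = wE e b := by
      intro e a b hab
      have hres : (fun i : {x // x ∈ F e} => a i.val) = (fun i : {x // x ∈ F e} => b i.val) :=
        funext fun (i : {x // x ∈ F e}) => hab i.1 i.2
      rw [hwE]
      simp only [hres]
    set P : (∀ i, Dom i) → ℝ≥0∞ := fun a => ∏ e, wE e a ^ δ e with hPdef
    have hedge : ∀ e, (∑' t : T d (F e ∩ (Finset.univ : Finset (Fin n))), wE e t.1)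
        = ENNReal.ofReal (∑ t ∈ R e, w e t) := by
      intro e
      rw [Finset.inter_univ]
      rw [← Equiv.tsum_eq (restrictEquiv d (F e)) (fun t => wE e t.1)]
      have hres : ∀ u : (i : {x // x ∈ F e}) → Dom i.val,
          (fun i : {x // x ∈ F e} => ((restrictEquiv d (F e)) u).1 i.val) = u := by
        intro u
        funext i
        show (if h : i.1 ∈ F e then u ⟨i.1, h⟩ else d i.1) = u i
        simp only [dif_pos i.2]
      have hval : ∀ u, wE e ((restrictEquiv d (F e)) u).1
          = if u ∈ R e then ENNReal.ofReal (w e u) else 0 := by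
        intro u
        rw [hwE]
        simp only [hres u]
      calc ∑' u, wE e ((restrictEquiv d (F e)) u).1
          = ∑' u, if u ∈ R e then ENNReal.ofReal (w e u) else 0 := tsum_congr hval
        _ = ∑ u ∈ R e, if u ∈ R e then ENNReal.ofReal (w e u) else 0 :=
            tsum_eq_sum (fun u hu => if_neg hu)
        _ = ∑ u ∈ R e, ENNReal.ofReal (w e u) :=
            Finset.sum_congr rfl fun u hu => if_pos hu
        _ = ENNReal.ofReal (∑ t ∈ R e, w e t) :=
            (ENNReal.ofReal_sum_of_nonneg (fun t _ => hw e t)).symm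
    have hchain : ∑ a ∈ Q, P a ≤ ∏ e, ENNReal.ofReal (∑ t ∈ R e, w e t) ^ δ e := by
      have h1 : ∑ a ∈ Q, P a ≤ ∑' a : ∀ i, Dom i, P a := ENNReal.sum_le_tsum Q
      have h2 : ∑' a : ∀ i, Dom i, P a = ∑' a : T d (Finset.univ : Finset (Fin n)), P a.1 := by
        exact (Equiv.tsum_eq (Equiv.subtypeUnivEquiv
          (fun a i hi => absurd (Finset.mem_univ i) hi)) P).symm
      have h3 := main_induction d F δ hδ Finset.univ wE hdepE (fun v _ => hcover v)
      calc ∑ a ∈ Q, P a ≤ ∑' a : ∀ i, Dom i, P a := h1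
        _ = ∑' a : T d (Finset.univ : Finset (Fin n)), P a.1 := h2
        _ ≤ ∏ e, (∑' t : T d (F e ∩ Finset.univ), wE e t.1) ^ δ e := h3
        _ = ∏ e, ENNReal.ofReal (∑ t ∈ R e, w e t) ^ δ e := by
            exact Finset.prod_congr rfl fun e _ => by rw [hedge e]
    have hBne : (∏ e, ENNReal.ofReal (∑ t ∈ R e, w e t) ^ δ e) ≠ ∞ := by
      refine ENNReal.prod_ne_top fun e _ => ?_
      exact ENNReal.rpow_ne_top_of_nonneg (hδ e) ENNReal.ofReal_ne_top
    have hBval : (∏ e, ENNReal.ofReal (∑ t ∈ R e, w e t) ^ δ e).toReal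
        = ∏ e, rpow0 (∑ t ∈ R e, w e t) (δ e) := by
      rw [ENNReal.toReal_prod]
      refine Finset.prod_congr rfl fun e _ => ?_
      rw [ENNReal.ofReal_rpow_of_nonneg (hSnn e) (hδ e),
        ENNReal.toReal_ofReal (Real.rpow_nonneg (hSnn e) _)]
      unfold rpow0
      rw [if_neg (hdeg e)]
    have hPfin : ∀ a ∈ Q, P a ≠ ∞ := by
      intro a _
      refine ENNReal.prod_ne_top fun e _ => ?_
      refine ENNReal.rpow_ne_top_of_nonneg (hδ e) ?_
      rw [hwE]
      dsimp only
      split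
      · exact ENNReal.ofReal_ne_top
      · exact ENNReal.zero_ne_top
    calc ∑ a ∈ Q, ∏ e, rpow0 (w e (fun i : {x // x ∈ F e} => a i.val)) (δ e)
        ≤ ∑ a ∈ Q, (P a).toReal := by
          refine Finset.sum_le_sum fun a ha => ?_
          have htr : (P a).toReal = ∏ e, (w e (fun i : {x // x ∈ F e} => a i.val)) ^ (δ e) := by
            rw [hPdef, ENNReal.toReal_prod]
            refine Finset.prod_congr rfl fun e _ => ?_
            rw [hwE]
            simp only [if_pos ((hQ a).1 ha e)]
            rw [ENNReal.ofReal_rpow_of_nonneg (hw e _) (hδ e),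
              ENNReal.toReal_ofReal (Real.rpow_nonneg (hw e _) _)]
          rw [htr]
          exact Finset.prod_le_prod (fun e _ => rpow0_nonneg (hw e _))
            (fun e _ => rpow0_le_rpow (hw e _))
      _ = (∑ a ∈ Q, P a).toReal := (ENNReal.toReal_sum hPfin).symm
      _ ≤ (∏ e, ENNReal.ofReal (∑ t ∈ R e, w e t) ^ δ e).toReal :=
          ENNReal.toReal_mono hBne hchain
      _ = ∏ e, rpow0 (∑ t ∈ R e, w e t) (δ e) := hBval
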